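/- Define [n] = 2·sin(n·λ/2) for a real number λ and positive integer n. Then for all positive integers n, (2n+1)·[1]^2 = [1]·[2n+1] + ∑_{a=1}^{n} [1]^2·[a]^2. -/
import Mathlib


open Finset

lemma key_trig (lam : ℝ) (n : ℕ) :
    2 * (2 * Real.sin (1 * lam / 2)) ^ 2 =
      2 * Real.sin (1 * lam / 2) * (2 * Real.sin ((2 * (n:ℝ) + 3) * lam / 2))
      - 2 * Real.sin (1 * lam / 2) * (2 * Real.sin ((2 * (n:ℝ) + 1) * lam / 2))
      + (2 * Real.sin (1 * lam / 2)) ^ 2 * (2 * Real.sin (((n:ℝ) + 1) * lam / 2)) ^ 2 := by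
  have e1 : (2 * (n:ℝ) + 3) * lam / 2 = 2 * (((n:ℝ) + 1) * lam / 2) + lam / 2 := by ring
  have e2 : (2 * (n:ℝ) + 1) * lam / 2 = 2 * (((n:ℝ) + 1) * lam / 2) - lam / 2 := by ring
  have e3 : 1 * lam / 2 = lam / 2 := by ring
  rw [e1, e2, e3]
  set x := lam / 2
  set y := ((n:ℝ) + 1) * lam / 2
  have h1 := Real.sin_add (2 * y) x
  have h2 := Real.sin_sub (2 * y) x
  have h3 := Real.cos_two_mul' y
  linear_combination (-4*Real.sin x) * h1 + (4*Real.sin x) * h2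
    + (-8*Real.sin x ^ 2) * h3 + (-8*Real.sin x ^ 2) * Real.sin_sq_add_cos_sq y

theorem stmt_3 (lam : ℝ) (b : ℕ → ℝ) (hb : ∀ n : ℕ, 0 < n → b n = 2 * Real.sin (n * lam / 2)) :
    ∀ n : ℕ, 0 < n →
      (2 * n + 1 : ℝ) * (b 1) ^ 2 =
        b 1 * b (2 * n + 1) + ∑ a ∈ Finset.Icc 1 n, (b 1) ^ 2 * (b a) ^ 2 := by
  have main : ∀ n : ℕ,
      (2 * n + 1 : ℝ) * (b 1) ^ 2 =
        b 1 * b (2 * n + 1) + ∑ a ∈ Finset.Icc 1 n, (b 1) ^ 2 * (b a) ^ 2 := by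
    intro n
    induction n with
    | zero => simp; ring
    | succ n ih =>
      rw [Finset.sum_Icc_succ_top (Nat.le_add_left 1 n)]
      have h1 := hb 1 one_pos
      have h2 := hb (2 * n + 1) (by omega)
      have h3 := hb (2 * (n + 1) + 1) (by omega)
      have h4 := hb (n + 1) (by omega)
      have key := key_trig lam n
      push_cast at h1 h2 h3 h4 ⊢
      rw [h1, h2] at ih
      rw [h1, h3, h4]
      have e1 : (2 * ((n:ℝ) + 1) + 1) * lam / 2 = (2 * (n:ℝ) + 3) * lam / 2 := by ring
      rw [e1]
      linarith [key, ih]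
  intro n _
  exact main n
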